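/- For α = 2, the double series ∑_{k≥1,n≥1} [Γ(k/2 + n)/(Γ(2n)·k!)]·(−1)^{k+n}·sin(πk/2)·[k·c + (2n−1)(c−x)]·(c−x)^{k−1}·c^{2n−2} equals π·(2c−x)/(2√π)·exp(−(2c−x)²/4) for all reals c > max(x,0). -/

import Mathlib

open Real Finset

private lemma gamma_half' (n : ℕ) : Real.Gamma ((n:ℝ) + 1/2)
    = Real.sqrt Real.pi * (Nat.factorial (2*n)) / (4^n * Nat.factorial n) := by
  induction n with
  | zero => norm_num [Real.Gamma_one_half_eq]
  | succ n ih =>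
      have h0 : ((n:ℝ) + 1/2) ≠ 0 := by positivity
      have h1 : ((n+1:ℕ):ℝ) + 1/2 = ((n:ℝ) + 1/2) + 1 := by push_cast; ring
      rw [h1, Real.Gamma_add_one h0, ih]
      have h2 : 2*(n+1) = (2*n+1)+1 := by ring
      rw [h2, Nat.factorial_succ, Nat.factorial_succ, Nat.factorial_succ]
      have h3 : (0:ℝ) < ((Nat.factorial n : ℕ) : ℝ) := by positivity
      field_simp
      push_cast
      ring

private lemma sum_range_two_mul' (g : ℕ → ℝ) (n : ℕ) :
    ∑ i ∈ range (2*n), g i = ∑ j ∈ range n, (g (2*j) + g (2*j+1)) := by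
  induction n with
  | zero => simp
  | succ n ih =>
      have h : 2*(n+1) = (2*n+1)+1 := by ring
      rw [h, Finset.sum_range_succ, Finset.sum_range_succ, ih, Finset.sum_range_succ]
      ring

private lemma keybinom' (a c : ℝ) (m : ℕ) :
    ∑ p ∈ Finset.HasAntidiagonal.antidiagonal m,
      ((Nat.choose (2*m+1) (2*p.1) : ℝ) * a^(2*p.1) * c^(2*p.2+1)
        + (Nat.choose (2*m+1) (2*p.1+1) : ℝ) * a^(2*p.1+1) * c^(2*p.2))
      = (a+c)^(2*m+1) := by
  rw [add_pow, Finset.Nat.sum_antidiagonal_eq_sum_range_succ_mk]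
  have h : 2*m+1+1 = 2*(m+1) := by ring
  rw [h, sum_range_two_mul']
  apply Finset.sum_congr rfl
  intro j hj
  have hj' : j ≤ m := by simpa using Nat.lt_succ_iff.mp (Finset.mem_range.mp hj)
  have e1 : 2*m+1 - 2*j = 2*(m-j)+1 := by omega
  have e2 : 2*m+1 - (2*j+1) = 2*(m-j) := by omega
  rw [e1, e2]
  ring

private noncomputable def Fterm (x c : ℝ) (p : ℕ × ℕ) : ℝ :=
  Real.Gamma (((p.1 : ℝ) + 1)/2 + ((p.2 : ℝ) + 1)) /
      (Real.Gamma (2 * ((p.2 : ℝ) + 1)) * Nat.factorial (p.1 + 1)) *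
    (-1 : ℝ) ^ ((p.1 + 1) + (p.2 + 1)) *
    Real.sin (Real.pi * ((p.1 : ℝ) + 1) / 2) *
    (((p.1 : ℝ) + 1) * c + (2 * ((p.2 : ℝ) + 1) - 1) * (c - x)) *
    (c - x) ^ p.1 * c ^ (2 * p.2)

private noncomputable def Gterm (x c : ℝ) (q : ℕ × ℕ) : ℝ :=
  (Real.sqrt Real.pi / 2) * ((-1)^(q.1+q.2) / (4^(q.1+q.2) * Nat.factorial (q.1+q.2))) *
    ((Nat.choose (2*(q.1+q.2)+1) (2*q.1) : ℝ) * (c-x)^(2*q.1) * c^(2*q.2+1)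
     + (Nat.choose (2*(q.1+q.2)+1) (2*q.1+1) : ℝ) * (c-x)^(2*q.1+1) * c^(2*q.2))

private lemma Fterm_odd (x c : ℝ) (t l : ℕ) : Fterm x c (2*t+1, l) = 0 := by
  have h : Real.sin (Real.pi * (((2*t+1:ℕ):ℝ)+1)/2) = 0 := by
    have h1 : Real.pi * (((2*t+1:ℕ):ℝ)+1)/2 = ((t+1:ℕ):ℝ) * Real.pi := by push_cast; ring
    rw [h1, Real.sin_nat_mul_pi]
  simp only [Fterm]
  rw [h]
  ring

private lemma Fterm_even (x c : ℝ) (j l : ℕ) : Fterm x c (2*j, l) = Gterm x c (j, l) := by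
  show Real.Gamma ((((2*j:ℕ):ℝ) + 1)/2 + ((l:ℝ) + 1)) /
        (Real.Gamma (2*((l:ℝ)+1)) * Nat.factorial (2*j+1)) *
      (-1:ℝ)^((2*j+1)+(l+1)) * Real.sin (Real.pi * (((2*j:ℕ):ℝ)+1)/2) *
      ((((2*j:ℕ):ℝ)+1)*c + (2*((l:ℝ)+1)-1)*(c-x)) * (c-x)^(2*j) * c^(2*l) = _
  have hG1 : (((2*j:ℕ):ℝ) + 1)/2 + ((l:ℝ) + 1) = ((j+l+1 : ℕ):ℝ) + 1/2 := by
    push_cast; ring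
  have hG2 : 2*((l:ℝ)+1) = ((2*l+1 : ℕ):ℝ) + 1 := by push_cast; ring
  have hsin : Real.sin (Real.pi * (((2*j:ℕ):ℝ)+1)/2) = (-1)^j := by
    have harg : Real.pi * (((2*j:ℕ):ℝ)+1)/2 = (j:ℝ)*Real.pi + Real.pi/2 := by
      push_cast; ring
    rw [harg, Real.sin_add_pi_div_two]
    have := Real.cos_nat_mul_pi_sub 0 j
    simpa using this
  have hsgn : (-1:ℝ)^((2*j+1)+(l+1)) = (-1)^l := by
    have h : (2*j+1)+(l+1) = 2*(j+1)+l := by ring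
    rw [h, pow_add, pow_mul, neg_one_sq, one_pow, one_mul]
  rw [hG1, hG2, gamma_half', Real.Gamma_nat_eq_factorial, hsin, hsgn]
  show _ = (Real.sqrt Real.pi / 2) * ((-1)^(j+l) / (4^(j+l) * Nat.factorial (j+l))) *
      ((Nat.choose (2*(j+l)+1) (2*j) : ℝ) * (c-x)^(2*j) * c^(2*l+1)
       + (Nat.choose (2*(j+l)+1) (2*j+1) : ℝ) * (c-x)^(2*j+1) * c^(2*l))
  have hn1 : (2*(j+l)+1) - (2*j) = 2*l+1 := by omega
  have hc1 := Nat.cast_choose ℝ (show 2*j ≤ 2*(j+l)+1 by omega)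
  rw [hn1] at hc1
  have hn2 : (2*(j+l)+1) - (2*j+1) = 2*l := by omega
  have hc2 := Nat.cast_choose ℝ (show 2*j+1 ≤ 2*(j+l)+1 by omega)
  rw [hn2] at hc2
  rw [hc1, hc2]
  rw [show 2*(j+l+1) = (2*(j+l)+1)+1 by ring]
  simp only [Nat.factorial_succ]
  have p1 : (0:ℝ) < ((Nat.factorial (2*(j+l)+1) : ℕ) : ℝ) := by positivity
  have p2 : (0:ℝ) < ((Nat.factorial (j+l) : ℕ) : ℝ) := by positivity
  have p3 : (0:ℝ) < ((Nat.factorial (2*j) : ℕ) : ℝ) := by positivity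
  have p4 : (0:ℝ) < ((Nat.factorial (2*l) : ℕ) : ℝ) := by positivity
  push_cast
  field_simp
  ring

theorem stmt_7 (x c : ℝ) (hc : max x 0 < c) :
    (∑' p : ℕ × ℕ,
      Real.Gamma (((p.1 : ℝ) + 1)/2 + ((p.2 : ℝ) + 1)) /
          (Real.Gamma (2 * ((p.2 : ℝ) + 1)) * Nat.factorial (p.1 + 1)) *
        (-1 : ℝ) ^ ((p.1 + 1) + (p.2 + 1)) *
        Real.sin (Real.pi * ((p.1 : ℝ) + 1) / 2) *
        (((p.1 : ℝ) + 1) * c + (2 * ((p.2 : ℝ) + 1) - 1) * (c - x)) *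
        (c - x) ^ p.1 * c ^ (2 * p.2))
    = Real.pi * ((2*c - x) / (2 * Real.sqrt Real.pi) *
        Real.exp (-(2*c - x)^2 / 4)) := by
  have hx : x < c := lt_of_le_of_lt (le_max_left _ _) hc
  have hc0 : (0:ℝ) < c := lt_of_le_of_lt (le_max_right _ _) hc
  have ha : (0:ℝ) < c - x := by linarith
  set s : ℝ := (c - x) + c with hs_def
  have hs0 : 0 < s := by positivity
  -- Step A : reduce to even first coordinates
  have stepA : (∑' p : ℕ × ℕ, Fterm x c p) = ∑' q : ℕ × ℕ, Gterm x c q := by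
    apply tsum_eq_tsum_of_ne_zero_bij
      (i := fun q => (2 * (q : ℕ × ℕ).1, (q : ℕ × ℕ).2))
    · intro q1 q2 h
      have h' : (2 * (q1 : ℕ × ℕ).1, (q1 : ℕ × ℕ).2)
          = (2 * (q2 : ℕ × ℕ).1, (q2 : ℕ × ℕ).2) := h
      have h1 := congrArg Prod.fst h'
      have h2 := congrArg Prod.snd h'
      simp only at h1 h2
      apply Subtype.ext
      exact Prod.ext (by omega) h2
    · intro p hp
      rcases Nat.even_or_odd p.1 with ⟨t, ht⟩ | ⟨t, ht⟩
      · have hpt : p = (2*t, p.2) := Prod.ext (by omega) rfl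
        have hG : Gterm x c (t, p.2) ≠ 0 := by
          rw [← Fterm_even x c t p.2, ← hpt]; exact hp
        exact ⟨⟨(t, p.2), hG⟩, hpt.symm⟩
      · exfalso
        apply hp
        have : p = (2*t+1, p.2) := Prod.ext (by omega) rfl
        rw [this]
        exact Fterm_odd x c t p.2
    · intro q
      exact Fterm_even x c (q : ℕ × ℕ).1 (q : ℕ × ℕ).2
  -- fiber sums
  have hfiber : ∀ m : ℕ, ∑ p ∈ Finset.HasAntidiagonal.antidiagonal m, Gterm x c p
      = (Real.sqrt Real.pi / 2) * ((-1)^m / (4^m * Nat.factorial m)) * s^(2*m+1) := by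
    intro m
    have hcongr : ∀ p ∈ Finset.HasAntidiagonal.antidiagonal m, Gterm x c p
        = (Real.sqrt Real.pi / 2) * ((-1)^m / (4^m * Nat.factorial m)) *
          ((Nat.choose (2*m+1) (2*p.1) : ℝ) * (c-x)^(2*p.1) * c^(2*p.2+1)
           + (Nat.choose (2*m+1) (2*p.1+1) : ℝ) * (c-x)^(2*p.1+1) * c^(2*p.2)) := by
      intro p hp
      have hpm : p.1 + p.2 = m := Finset.HasAntidiagonal.mem_antidiagonal.mp hp
      simp only [Gterm]
      rw [hpm]
    rw [Finset.sum_congr rfl hcongr, ← Finset.mul_sum, keybinom']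
  -- summability on the sigma type
  have hsummand : Summable (fun m : ℕ =>
      (Real.sqrt Real.pi / 2) * (s^(2*m+1) / (4^m * Nat.factorial m))) := by
    have h := (Real.summable_pow_div_factorial (s^2/4)).mul_left
      ((Real.sqrt Real.pi / 2) * s)
    apply h.congr
    intro m
    rw [div_pow, ← pow_mul]
    have h4 : ((4:ℝ)^m) ≠ 0 := by positivity
    have hm : ((Nat.factorial m : ℕ) : ℝ) ≠ 0 := by positivity
    field_simp
    ring
  have habs : ∀ m : ℕ, ∀ p ∈ Finset.HasAntidiagonal.antidiagonal m,
      |Gterm x c p| = (-1:ℝ)^m * Gterm x c p := by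
    intro m p hp
    have hpm : p.1 + p.2 = m := Finset.HasAntidiagonal.mem_antidiagonal.mp hp
    have hB : (0:ℝ) ≤ (Nat.choose (2*m+1) (2*p.1) : ℝ) * (c-x)^(2*p.1) * c^(2*p.2+1)
        + (Nat.choose (2*m+1) (2*p.1+1) : ℝ) * (c-x)^(2*p.1+1) * c^(2*p.2) := by
      positivity
    have hG : Gterm x c p = (-1:ℝ)^m * ((Real.sqrt Real.pi / 2) * (1 / (4^m * Nat.factorial m)) *
        ((Nat.choose (2*m+1) (2*p.1) : ℝ) * (c-x)^(2*p.1) * c^(2*p.2+1)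
         + (Nat.choose (2*m+1) (2*p.1+1) : ℝ) * (c-x)^(2*p.1+1) * c^(2*p.2))) := by
      simp only [Gterm, hpm]
      ring
    have hm1 : ((-1:ℝ)^m) * ((-1:ℝ)^m) = 1 := by
      rw [← pow_add]; exact Even.neg_one_pow ⟨m, by ring⟩
    have h1 : (0:ℝ) ≤ (Real.sqrt Real.pi / 2) * (1 / (4^m * Nat.factorial m)) := by positivity
    rw [hG, abs_mul, abs_pow, abs_neg, abs_one, one_pow, one_mul,
      abs_of_nonneg (mul_nonneg h1 hB), ← mul_assoc, hm1, one_mul]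
  have hsig : Summable (fun σ : Σ m : ℕ, {p // p ∈ Finset.HasAntidiagonal.antidiagonal m} =>
      Gterm x c (σ.2 : ℕ × ℕ)) := by
    apply Summable.of_abs
    rw [summable_sigma_of_nonneg (fun σ => abs_nonneg _)]
    constructor
    · intro m; exact Summable.of_finite
    · apply Summable.congr hsummand
      intro m
      have h1 : ∑' (p : {p // p ∈ Finset.HasAntidiagonal.antidiagonal m}), |Gterm x c (p : ℕ × ℕ)|
          = ∑ p ∈ Finset.HasAntidiagonal.antidiagonal m, |Gterm x c p| :=
        Finset.tsum_subtype (Finset.HasAntidiagonal.antidiagonal m) (fun p => |Gterm x c p|)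
      rw [h1, Finset.sum_congr rfl (habs m), ← Finset.mul_sum, hfiber]
      have hm1 : ((-1:ℝ)^m) * ((-1:ℝ)^m) = 1 := by
        rw [← pow_add]; exact Even.neg_one_pow ⟨m, by ring⟩
      linear_combination
        (-(Real.sqrt Real.pi/2 * (s^(2*m+1)/(4^m * (Nat.factorial m : ℝ))))) * hm1
  -- assemble everything
  have key : (∑' p : ℕ × ℕ, Fterm x c p)
      = Real.pi * ((2*c - x) / (2 * Real.sqrt Real.pi) * Real.exp (-(2*c - x)^2 / 4)) := by
    calc ∑' p : ℕ × ℕ, Fterm x c p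
        = ∑' q : ℕ × ℕ, Gterm x c q := stepA
      _ = ∑' σ : Σ m : ℕ, {p // p ∈ Finset.HasAntidiagonal.antidiagonal m}, Gterm x c (σ.2 : ℕ × ℕ) :=
          (Equiv.tsum_eq (Finset.HasAntidiagonal.sigmaAntidiagonalEquivProd) (Gterm x c)).symm
      _ = ∑' m : ℕ, ∑' p : {p // p ∈ Finset.HasAntidiagonal.antidiagonal m}, Gterm x c (p : ℕ × ℕ) :=
          Summable.tsum_sigma hsig
      _ = ∑' m : ℕ, (Real.sqrt Real.pi / 2) * ((-1)^m / (4^m * Nat.factorial m)) * s^(2*m+1) := by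
          apply tsum_congr; intro m
          rw [Finset.tsum_subtype (Finset.HasAntidiagonal.antidiagonal m) (fun p => Gterm x c p), hfiber]
      _ = ∑' m : ℕ, ((Real.sqrt Real.pi / 2) * s) * ((-(s^2)/4)^m / Nat.factorial m) := by
          apply tsum_congr; intro m
          have hpow : (-(s^2)/4 : ℝ)^m = (-1)^m * s^(2*m) / 4^m := by
            rw [div_pow, neg_pow, ← pow_mul]
          rw [hpow]
          have h4 : ((4:ℝ)^m) ≠ 0 := by positivity
          have hm : ((Nat.factorial m : ℕ) : ℝ) ≠ 0 := by positivity
          field_simp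
          try ring
      _ = ((Real.sqrt Real.pi / 2) * s) * ∑' m : ℕ, (-(s^2)/4)^m / Nat.factorial m :=
          tsum_mul_left
      _ = ((Real.sqrt Real.pi / 2) * s) * Real.exp (-(s^2)/4) := by
          rw [Real.exp_eq_exp_ℝ, NormedSpace.exp_eq_tsum_div]
      _ = Real.pi * ((2*c - x) / (2 * Real.sqrt Real.pi) * Real.exp (-(2*c - x)^2 / 4)) := by
          have hs2 : s = 2*c - x := by rw [hs_def]; ring
          rw [hs2]
          have hpp : Real.sqrt Real.pi * Real.sqrt Real.pi = Real.pi :=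
            Real.mul_self_sqrt Real.pi_pos.le
          have hp0 : Real.sqrt Real.pi ≠ 0 := by positivity
          have hpp2 : Real.sqrt Real.pi ^ 2 = Real.pi := by rw [sq]; exact hpp
          field_simp
          linear_combination (2*c - x) * hpp
  exact key
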